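/- For t ≥ 2, the total sum of sizes of all partitions with distinct parts that are simultaneously t-core and (t+1)-core equals Σ_{i+j+k=t+1, i,j,k≥1} F_i·F_j·F_k. -/

import Mathlib

/-- The hook length of the box in row i (0-indexed) and column j (1-indexed) of the Young
diagram of the partition (λ_1, ..., λ_ℓ): arm + leg + 1. -/
def hook (l : List ℕ) (i j : ℕ) : ℕ :=
  (l.getD i 0 - j) + ((l.drop (i + 1)).filter (fun p => decide (j ≤ p))).length + 1

/-- A partition is an s-core if none of its hook lengths equals s. -/
def IsCore (l : List ℕ) (s : ℕ) : Prop :=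
  ∀ i j, i < l.length → 1 ≤ j → j ≤ l.getD i 0 → hook l i j ≠ s

/-- ψ_n = Σ_{i+j+k=n, i,j,k ≥ 1} F_i F_j F_k. -/
def psi (n : ℕ) : ℕ :=
  ∑ i ∈ Finset.range (n + 1), ∑ j ∈ Finset.range (n + 1), ∑ k ∈ Finset.range (n + 1),
    if i + j + k = n ∧ 1 ≤ i ∧ 1 ≤ j ∧ 1 ≤ k then Nat.fib i * Nat.fib j * Nat.fib k else 0

/- ### Auxiliary development -/
/- ### basic list lemmas -/

lemma le_headI_of_mem {l : List ℕ} {p : ℕ} (hs : l.Pairwise (· > ·)) (hp : p ∈ l) :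
    p ≤ l.headI := by
  cases l with
  | nil => simp at hp
  | cons a tl =>
    rcases List.mem_cons.mp hp with rfl | h
    · simp
    · exact le_of_lt ((List.pairwise_cons.mp hs).1 p h)

lemma getD_mem {l : List ℕ} {i : ℕ} (h : i < l.length) : l.getD i 0 ∈ l := by
  rw [List.getD_eq_getElem _ _ h]; exact List.getElem_mem h

/- ### easy direction: small perimeter implies core -/

lemma hook_le {l : List ℕ} (hs : l.Pairwise (· > ·)) (hpos : ∀ p ∈ l, 0 < p)
    {i j : ℕ} (hi : i < l.length) (hj : 1 ≤ j) :
    hook l i j ≤ l.headI + l.length - 1 := by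
  have h1 : l.getD i 0 ≤ l.headI := le_headI_of_mem hs (getD_mem hi)
  have h2 : ((l.drop (i + 1)).filter (fun p => decide (j ≤ p))).length ≤ l.length - 1 := by
    calc ((l.drop (i + 1)).filter (fun p => decide (j ≤ p))).length
        ≤ (l.drop (i + 1)).length := List.length_filter_le _ _
      _ = l.length - (i + 1) := List.length_drop
      _ ≤ l.length - 1 := by omega
  have h3 : 0 < l.headI := by
    have : l ≠ [] := by intro h; subst h; simp at hi
    cases l with
    | nil => simp at this
    | cons a tl => exact hpos a (List.mem_cons_self)
  unfold hook
  omega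

lemma isCore_of_bound {l : List ℕ} {t : ℕ} (hs : l.Pairwise (· > ·)) (hpos : ∀ p ∈ l, 0 < p)
    (hb : l.headI + l.length ≤ t) {s : ℕ} (hts : t ≤ s) : IsCore l s := by
  intro i j hi hj _
  have := hook_le hs hpos hi hj
  have h3 : 0 < l.headI := by
    cases l with
    | nil => simp at hi
    | cons a tl => exact hpos a (List.mem_cons_self)
  omega
lemma filter_step {L : List ℕ} (hnd : L.Nodup) (j : ℕ) :
    (L.filter (fun p => decide (j ≤ p))).length ≤
      (L.filter (fun p => decide (j + 1 ≤ p))).length + 1 := by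
  induction L with
  | nil => simp
  | cons a L ih =>
    have hnd' : L.Nodup := (List.nodup_cons.mp hnd).2
    have ha : a ∉ L := (List.nodup_cons.mp hnd).1
    have hih := ih hnd'
    simp only [List.filter_cons]
    by_cases h1 : j + 1 ≤ a
    · have h0 : j ≤ a := by omega
      rw [if_pos (by simpa using h0), if_pos (by simpa using h1)]
      simp only [List.length_cons]
      omega
    · by_cases h0 : j ≤ a
      · have haj : a = j := by omega
        have hfe : L.filter (fun p => decide (j ≤ p)) = L.filter (fun p => decide (j + 1 ≤ p)) := by
          apply List.filter_congr
          intro x hx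
          have : x ≠ j := by rintro rfl; exact ha (haj ▸ hx)
          simp only [decide_eq_decide]
          omega
        rw [if_pos (by simpa using h0), if_neg (by simpa using h1), hfe]
        simp only [List.length_cons]
        omega
      · rw [if_neg (by simpa using h0), if_neg (by simpa using h1)]
        omega

lemma hook_zero_one {h : ℕ} {tl : List ℕ} (hpos : ∀ p ∈ (h :: tl), 0 < p) :
    hook (h :: tl) 0 1 = h + tl.length := by
  have h1 : 0 < h := hpos h (List.mem_cons_self)
  have hf : tl.filter (fun p => decide (1 ≤ p)) = tl := by
    apply List.filter_eq_self.mpr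
    intro x hx
    have := hpos x (List.mem_cons_of_mem _ hx)
    simp only [decide_eq_true_eq]; omega
  unfold hook
  simp only [List.getD_cons_zero, List.drop_succ_cons, List.drop_zero, hf]
  omega

lemma hook_zero_head {h : ℕ} {tl : List ℕ} (hs : (h :: tl).Pairwise (· > ·)) :
    hook (h :: tl) 0 h = 1 := by
  have hf : tl.filter (fun p => decide (h ≤ p)) = [] := by
    apply List.filter_eq_nil_iff.mpr
    intro x hx
    have := (List.pairwise_cons.mp hs).1 x hx
    simp only [decide_eq_true_eq]
    omega
  unfold hook
  simp only [List.getD_cons_zero, List.drop_succ_cons, List.drop_zero, hf]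
  simp

lemma hook_zero_step {h : ℕ} {tl : List ℕ} (hs : (h :: tl).Pairwise (· > ·)) (j : ℕ) :
    hook (h :: tl) 0 j ≤ hook (h :: tl) 0 (j + 1) + 2 := by
  have hnd : tl.Nodup := (List.pairwise_cons.mp hs).2.nodup
  have := filter_step hnd j
  unfold hook
  simp only [List.getD_cons_zero, List.drop_succ_cons, List.drop_zero]
  omega

lemma bound_of_cores {l : List ℕ} {t : ℕ} (ht : 2 ≤ t) (hs : l.Pairwise (· > ·))
    (hpos : ∀ p ∈ l, 0 < p) (hc : IsCore l t) (hc1 : IsCore l (t + 1)) :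
    l.headI + l.length ≤ t := by
  by_contra hbig
  push_neg at hbig
  cases l with
  | nil => simp at hbig
  | cons h tl =>
    have hh : 0 < h := hpos h (List.mem_cons_self)
    have hbig' : t ≤ h + tl.length := by
      simp only [List.headI_cons, List.length_cons] at hbig
      omega
    have hg1 : t ≤ hook (h :: tl) 0 1 := by rw [hook_zero_one hpos]; exact hbig'
    have hgh : hook (h :: tl) 0 h = 1 := hook_zero_head hs
    have hdec : DecidablePred (fun j => t ≤ hook (h :: tl) 0 j) := fun j => by infer_instance
    set j0 := Nat.findGreatest (fun j => t ≤ hook (h :: tl) 0 j) h with hj0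
    have hj0ge : 1 ≤ j0 := Nat.le_findGreatest (P := fun j => t ≤ hook (h :: tl) 0 j) hh hg1
    have hj0le : j0 ≤ h := Nat.findGreatest_le h
    have hPj0 : t ≤ hook (h :: tl) 0 j0 := Nat.findGreatest_spec (P := fun j => t ≤ hook (h :: tl) 0 j) hh hg1
    have hj0lt : j0 < h := by
      rcases lt_or_eq_of_le hj0le with h' | h'
      · exact h'
      · exfalso; rw [h', hgh] at hPj0; omega
    have hnP : ¬ (t ≤ hook (h :: tl) 0 (j0 + 1)) :=
      Nat.findGreatest_is_greatest (P := fun j => t ≤ hook (h :: tl) 0 j) (n := h) (by omega) (by omega)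
    have hstep := hook_zero_step hs j0
    have hcase : hook (h :: tl) 0 j0 = t ∨ hook (h :: tl) 0 j0 = t + 1 := by omega
    rcases hcase with he | he
    · exact hc 0 j0 (by simp) hj0ge (by simpa using le_of_lt hj0lt) he
    · exact hc1 0 j0 (by simp) hj0ge (by simpa using le_of_lt hj0lt) he
def descL (n : ℕ) : List ℕ := (List.range n).reverse.map (· + 1)

lemma descL_succ (n : ℕ) : descL (n + 1) = (n + 1) :: descL n := by
  unfold descL
  rw [List.range_succ, List.reverse_append]
  simp

lemma mem_descL {n p : ℕ} : p ∈ descL n ↔ 1 ≤ p ∧ p ≤ n := by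
  unfold descL
  simp only [List.mem_map, List.mem_reverse, List.mem_range]
  constructor
  · rintro ⟨a, ha, rfl⟩; omega
  · rintro ⟨h1, h2⟩; exact ⟨p - 1, by omega, by omega⟩

lemma sorted_descL (n : ℕ) : (descL n).Pairwise (· > ·) := by
  induction n with
  | zero => simp [descL]
  | succ n ih =>
    rw [descL_succ, List.pairwise_cons]
    exact ⟨fun b hb => by have := mem_descL.mp hb; omega, ih⟩

lemma sublist_descL : ∀ (n : ℕ) (l : List ℕ), l.Pairwise (· > ·) →
    (∀ p ∈ l, 1 ≤ p ∧ p ≤ n) → l.Sublist (descL n) := by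
  intro n
  induction n with
  | zero =>
    intro l _ hmem
    cases l with
    | nil => simp
    | cons a tl => have := hmem a (List.mem_cons_self); omega
  | succ n ih =>
    intro l hs hmem
    rw [descL_succ]
    cases l with
    | nil => simp
    | cons a tl =>
      by_cases ha : a = n + 1
      · subst ha
        apply List.Sublist.cons₂
        apply ih tl (List.pairwise_cons.mp hs).2
        intro p hp
        have h1 := hmem p (List.mem_cons_of_mem _ hp)
        have h2 := (List.pairwise_cons.mp hs).1 p hp
        omega
      · apply List.Sublist.cons
        apply ih _ hs
        intro p hp
        have h1 := hmem p hp
        rcases List.mem_cons.mp hp with rfl | hp'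
        · omega
        · have h2 := (List.pairwise_cons.mp hs).1 p hp'
          have h3 := hmem a (List.mem_cons_self)
          omega

def Sset (t : ℕ) : Finset (List ℕ) :=
  (descL t).sublists.toFinset.filter (fun l => l.headI + l.length ≤ t)

lemma le_headI_of_mem' {l : List ℕ} {p : ℕ} (hs : l.Pairwise (· > ·)) (hp : p ∈ l) :
    p ≤ l.headI := by
  cases l with
  | nil => simp at hp
  | cons a tl =>
    rcases List.mem_cons.mp hp with rfl | h
    · simp
    · exact le_of_lt ((List.pairwise_cons.mp hs).1 p h)

lemma mem_Sset {t : ℕ} {l : List ℕ} :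
    l ∈ Sset t ↔ l.Pairwise (· > ·) ∧ (∀ p ∈ l, 0 < p) ∧ l.headI + l.length ≤ t := by
  unfold Sset
  rw [Finset.mem_filter, List.mem_toFinset, List.mem_sublists]
  constructor
  · rintro ⟨hsub, hb⟩
    refine ⟨(sorted_descL t).sublist hsub, fun p hp => ?_, hb⟩
    have := mem_descL.mp (hsub.subset hp)
    omega
  · rintro ⟨hs, hpos, hb⟩
    refine ⟨sublist_descL t l hs fun p hp => ⟨hpos p hp, ?_⟩, hb⟩
    have h1 := le_headI_of_mem' hs hp
    have h2 : l ≠ [] := by rintro rfl; simp at hp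
    have h3 : 1 ≤ l.length := by
      cases l; · simp at h2
      · simp
    omega

lemma length_le_of_mem_Sset {t : ℕ} {l : List ℕ} (h : l ∈ Sset t) : l.length ≤ t := by
  obtain ⟨hs, hpos, hb⟩ := mem_Sset.mp h
  cases l with
  | nil => simp
  | cons a tl =>
    have := hpos a (List.mem_cons_self)
    simp only [List.headI_cons, List.length_cons] at hb ⊢
    omega
lemma Sset_decomp (t : ℕ) :
    Sset (t + 2) = Sset (t + 1) ∪ (Sset t).image (fun μ => (t + 1 - μ.length) :: μ) := by
  ext l
  rw [Finset.mem_union, Finset.mem_image, mem_Sset]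
  constructor
  · rintro ⟨hs, hpos, hb⟩
    by_cases hsm : l.headI + l.length ≤ t + 1
    · exact Or.inl (mem_Sset.mpr ⟨hs, hpos, hsm⟩)
    · right
      have hb' : l.headI + l.length = t + 2 := by omega
      cases l with
      | nil => simp at hb'
      | cons h tl =>
        simp only [List.headI_cons, List.length_cons] at hb'
        refine ⟨tl, ?_, ?_⟩
        · rw [mem_Sset]
          have hstl := (List.pairwise_cons.mp hs).2
          refine ⟨hstl, fun p hp => hpos p (List.mem_cons_of_mem _ hp), ?_⟩
          cases tl with
          | nil => simp
          | cons b tb =>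
            have hbh : b < h := (List.pairwise_cons.mp hs).1 b (List.mem_cons_self)
            simp only [List.headI_cons, List.length_cons] at *
            omega
        · have : t + 1 - tl.length = h := by omega
          rw [this]
  · rintro (hl | ⟨μ, hμ, rfl⟩)
    · obtain ⟨hs, hpos, hb⟩ := mem_Sset.mp hl
      exact ⟨hs, hpos, by omega⟩
    · obtain ⟨hs, hpos, hb⟩ := mem_Sset.mp hμ
      have hlen : μ.length ≤ t := length_le_of_mem_Sset hμ
      have hhd : ∀ p ∈ μ, p < t + 1 - μ.length := by
        intro p hp
        have h1 := le_headI_of_mem' hs hp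
        have h2 : μ ≠ [] := by rintro rfl; simp at hp
        have h3 : 1 ≤ μ.length := by cases μ; · simp at h2
                                     · simp
        omega
      refine ⟨List.pairwise_cons.mpr ⟨hhd, hs⟩, ?_, ?_⟩
      · intro p hp
        rcases List.mem_cons.mp hp with rfl | hp'
        · omega
        · exact hpos p hp'
      · simp only [List.headI_cons, List.length_cons]
        omega

lemma Sset_disj (t : ℕ) :
    Disjoint (Sset (t + 1)) ((Sset t).image (fun μ => (t + 1 - μ.length) :: μ)) := by
  rw [Finset.disjoint_right]
  intro l hl hl'
  obtain ⟨μ, hμ, rfl⟩ := Finset.mem_image.mp hl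
  obtain ⟨_, _, hb⟩ := mem_Sset.mp hl'
  have hlen : μ.length ≤ t := length_le_of_mem_Sset hμ
  simp only [List.headI_cons, List.length_cons] at hb
  omega

lemma Sset_inj (t : ℕ) : ∀ x ∈ Sset t, ∀ y ∈ Sset t,
    (t + 1 - x.length) :: x = (t + 1 - y.length) :: y → x = y := by
  intro x _ y _ h
  exact (List.cons.injEq _ _ _ _ ▸ h).2

lemma Sset_zero : Sset 0 = {[]} := by
  ext l
  rw [mem_Sset, Finset.mem_singleton]
  constructor
  · rintro ⟨_, _, hb⟩
    cases l with
    | nil => rfl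
    | cons a tl => simp at hb
  · rintro rfl; simp

lemma Sset_one : Sset 1 = {[]} := by
  ext l
  rw [mem_Sset, Finset.mem_singleton]
  constructor
  · rintro ⟨_, hpos, hb⟩
    cases l with
    | nil => rfl
    | cons a tl =>
      have := hpos a (List.mem_cons_self)
      simp only [List.headI_cons, List.length_cons] at hb
      omega
  · rintro rfl; simp
def G (n : ℕ) : ℕ := ∑ j ∈ Finset.range (n + 1), Nat.fib j * Nat.fib (n - j)

/-- general Fibonacci-convolution recurrence -/
lemma conv_rec (F : ℕ → ℕ) (n : ℕ) :
    ∑ j ∈ Finset.range (n + 3), Nat.fib j * F (n + 2 - j) =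
      (∑ j ∈ Finset.range (n + 2), Nat.fib j * F (n + 1 - j)) +
      (∑ j ∈ Finset.range (n + 1), Nat.fib j * F (n - j)) + F (n + 1) := by
  rw [show n + 3 = (n + 2) + 1 by rfl, Finset.sum_range_succ' (fun j => Nat.fib j * F (n + 2 - j))]
  rw [show n + 2 = (n + 1) + 1 by rfl, Finset.sum_range_succ'
    (fun j => Nat.fib (j + 1) * F (n + 2 - (j + 1)))]
  rw [Finset.sum_range_succ' (fun j => Nat.fib j * F (n + 1 - j))]
  have h1 : ∀ i ∈ Finset.range (n + 1),
      Nat.fib (i + 1 + 1) * F (n + 2 - (i + 1 + 1)) =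
        Nat.fib (i + 1) * F (n - i) + Nat.fib i * F (n - i) := by
    intro i _
    have : n + 2 - (i + 1 + 1) = n - i := by omega
    rw [this, Nat.fib_add_two, add_mul]
    ring
  rw [Finset.sum_congr rfl h1, Finset.sum_add_distrib]
  have h2 : ∀ i ∈ Finset.range (n + 1),
      Nat.fib (i + 1) * F (n + 1 - (i + 1)) = Nat.fib (i + 1) * F (n - i) := by
    intro i _
    have e : n + 1 - (i + 1) = n - i := by omega
    rw [e]
  simp only [Nat.fib_zero, Nat.fib_one, zero_mul, one_mul, add_zero,
    show n + 2 - 1 = n + 1 from by omega]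
  rw [Finset.sum_congr rfl h2]
  ring

lemma G_rec (n : ℕ) : G (n + 2) = G (n + 1) + G n + Nat.fib (n + 1) := by
  unfold G
  have := conv_rec Nat.fib n
  convert this using 2

/-- psi as iterated convolution -/
lemma psi_eq (n : ℕ) : psi n = ∑ i ∈ Finset.range (n + 1), Nat.fib i * G (n - i) := by
  unfold psi
  apply Finset.sum_congr rfl
  intro i hi
  have hin : i ≤ n := by simpa using Nat.lt_succ_iff.mp (Finset.mem_range.mp hi)
  -- step 1: drop positivity conditions
  have step1 : ∀ j k : ℕ,
      (if i + j + k = n ∧ 1 ≤ i ∧ 1 ≤ j ∧ 1 ≤ k then Nat.fib i * Nat.fib j * Nat.fib k else 0)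
        = (if i + j + k = n then Nat.fib i * Nat.fib j * Nat.fib k else 0) := by
    intro j k
    split_ifs with h1 h2
    · rfl
    · exact absurd h1.1 h2
    · have : i = 0 ∨ j = 0 ∨ k = 0 := by omega
      rcases this with rfl | rfl | rfl <;> simp
    · rfl
  simp only [step1]
  -- step 2: collapse k-sum
  have step2 : ∀ j : ℕ,
      (∑ k ∈ Finset.range (n + 1),
        if i + j + k = n then Nat.fib i * Nat.fib j * Nat.fib k else 0)
        = (if i + j ≤ n then Nat.fib i * Nat.fib j * Nat.fib (n - i - j) else 0) := by
    intro j
    by_cases hij : i + j ≤ n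
    · rw [if_pos hij, Finset.sum_eq_single (n - i - j)]
      · rw [if_pos (by omega)]
      · intro b _ hb
        rw [if_neg (by omega)]
      · intro hmem
        exact absurd (Finset.mem_range.mpr (by omega)) hmem
    · rw [if_neg hij]
      apply Finset.sum_eq_zero
      intro k _
      rw [if_neg (by omega)]
  simp only [step2]
  -- step 3: collapse j-sum to G (n - i)
  rw [show ∑ j ∈ Finset.range (n + 1),
      (if i + j ≤ n then Nat.fib i * Nat.fib j * Nat.fib (n - i - j) else 0)
      = ∑ j ∈ Finset.range (n - i + 1), Nat.fib i * (Nat.fib j * Nat.fib (n - i - j)) from ?_]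
  · rw [← Finset.mul_sum]
    rfl
  · rw [← Finset.sum_subset (Finset.range_subset_range.mpr (by omega : n - i + 1 ≤ n + 1))]
    · apply Finset.sum_congr rfl
      intro j hj
      rw [if_pos (by simp at hj; omega)]
      ring
    · intro j _ hj
      rw [if_neg (by simp at hj; omega)]

lemma psi_rec (n : ℕ) : psi (n + 3) = psi (n + 2) + psi (n + 1) + G (n + 2) := by
  rw [psi_eq, psi_eq, psi_eq]
  have := conv_rec G (n + 1)
  convert this using 2

lemma G_two : G 2 = 1 := by decide
lemma G_three : G 3 = 2 := by decide
lemma psi_one : psi 1 = 0 := by decide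
lemma psi_two : psi 2 = 0 := by decide
lemma main_ind (t : ℕ) : (Sset t).card = Nat.fib (t + 1) ∧
    (∑ l ∈ Sset t, (t + 1 - l.length)) = G (t + 2) ∧
    (∑ l ∈ Sset t, l.sum) = psi (t + 1) := by
  induction t using Nat.strong_induction_on with
  | _ t ih =>
    match t with
    | 0 =>
      rw [Sset_zero]
      refine ⟨by simp, ?_, by simp [psi_one]⟩
      rw [G_two]; simp
    | 1 =>
      rw [Sset_one]
      refine ⟨by simp, ?_, by simp [psi_two]⟩
      rw [G_three]; simp
    | (n + 2) =>
      obtain ⟨c1, m1, s1⟩ := ih (n + 1) (by omega)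
      obtain ⟨c0, m0, s0⟩ := ih n (by omega)
      have c1' : (Sset (n + 1)).card = Nat.fib (n + 2) := c1
      have m1' : ∑ l ∈ Sset (n + 1), (n + 2 - l.length) = G (n + 3) := m1
      have s1' : ∑ l ∈ Sset (n + 1), l.sum = psi (n + 2) := s1
      have hdisj := Sset_disj n
      have hinj := Sset_inj n
      have f1 : Nat.fib (n + 2) = Nat.fib n + Nat.fib (n + 1) := Nat.fib_add_two
      have f2 : Nat.fib (n + 3) = Nat.fib (n + 1) + Nat.fib (n + 2) := Nat.fib_add_two
      have g4 : G (n + 4) = G (n + 3) + G (n + 2) + Nat.fib (n + 3) := G_rec (n + 2)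
      have p3 : psi (n + 3) = psi (n + 2) + psi (n + 1) + G (n + 2) := psi_rec n
      have hcard : (Sset (n + 2)).card = Nat.fib (n + 3) := by
        rw [Sset_decomp n, Finset.card_union_of_disjoint hdisj,
          Finset.card_image_of_injOn (fun x hx y hy h => hinj x hx y hy h), c1', c0]
        omega
      refine ⟨hcard, ?_, ?_⟩
      · -- M part
        show ∑ l ∈ Sset (n + 2), (n + 3 - l.length) = G (n + 4)
        rw [Sset_decomp n, Finset.sum_union hdisj, Finset.sum_image hinj]
        have A : ∑ l ∈ Sset (n + 1), (n + 3 - l.length) = G (n + 3) + Nat.fib (n + 2) := by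
          have e1 : ∑ l ∈ Sset (n + 1), (n + 3 - l.length)
              = ∑ l ∈ Sset (n + 1), ((n + 2 - l.length) + 1) := by
            apply Finset.sum_congr rfl
            intro l hl
            have := length_le_of_mem_Sset hl
            omega
          rw [e1, Finset.sum_add_distrib, m1', Finset.sum_const, c1', smul_eq_mul, mul_one]
        have B : ∑ μ ∈ Sset n, (n + 3 - ((n + 1 - μ.length) :: μ).length)
            = G (n + 2) + Nat.fib (n + 1) := by
          have e2 : ∑ μ ∈ Sset n, (n + 3 - ((n + 1 - μ.length) :: μ).length)
              = ∑ μ ∈ Sset n, ((n + 1 - μ.length) + 1) := by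
            apply Finset.sum_congr rfl
            intro μ hμ
            have := length_le_of_mem_Sset hμ
            simp only [List.length_cons]
            omega
          rw [e2, Finset.sum_add_distrib, m0, Finset.sum_const, c0, smul_eq_mul, mul_one]
        rw [A, B]
        omega
      · -- s part
        show ∑ l ∈ Sset (n + 2), l.sum = psi (n + 3)
        rw [Sset_decomp n, Finset.sum_union hdisj, Finset.sum_image hinj]
        have e2 : ∑ μ ∈ Sset n, ((n + 1 - μ.length) :: μ).sum
            = ∑ μ ∈ Sset n, ((n + 1 - μ.length) + μ.sum) := by
          apply Finset.sum_congr rfl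
          intro μ _
          simp
        rw [e2, Finset.sum_add_distrib, s1', m0, s0]
        omega

/-- The total sum of the sizes of all (t, t+1)-core partitions with distinct parts equals
Σ_{i+j+k=t+1, i,j,k≥1} F_i F_j F_k. -/
theorem total_size_distinct_core (t : ℕ) (ht : 2 ≤ t) :
    ∃ S : Finset (List ℕ),
      (∀ l, l ∈ S ↔ (l.Pairwise (· > ·) ∧ (∀ p ∈ l, 0 < p) ∧
        IsCore l t ∧ IsCore l (t + 1))) ∧
      ∑ l ∈ S, l.sum = psi (t + 1) := by
  refine ⟨Sset t, fun l => ?_, (main_ind t).2.2⟩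
  rw [mem_Sset]
  constructor
  · rintro ⟨hs, hpos, hb⟩
    exact ⟨hs, hpos, isCore_of_bound hs hpos hb le_rfl,
      isCore_of_bound hs hpos hb (by omega)⟩
  · rintro ⟨hs, hpos, hc, hc1⟩
    exact ⟨hs, hpos, bound_of_cores ht hs hpos hc hc1⟩
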